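/- Each involution s_x, s_y, s_z satisfies s^*Ω = -Ω, where Ω = dy∧dz/(2x+yz-A) is the holomorphic 2-form on the smooth part of S_{A,B,C,D}; consequently every element of Γ = ⟨g_x, g_y, g_z⟩ preserves Ω. -/

import Mathlib

noncomputable section

/-- The involution s_x on ℂ³ (here ℂ³ = Fin 3 → ℂ). -/
def sxE (A : ℂ) : Function.End (Fin 3 → ℂ) :=
  fun p => ![-p 0 - p 1 * p 2 + A, p 1, p 2]

/-- The involution s_y. -/
def syE (B : ℂ) : Function.End (Fin 3 → ℂ) :=
  fun p => ![p 0, -p 1 - p 0 * p 2 + B, p 2]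

/-- The involution s_z. -/
def szE (C : ℂ) : Function.End (Fin 3 → ℂ) :=
  fun p => ![p 0, p 1, -p 2 - p 0 * p 1 + C]

/-- The affine cubic surface S_{A,B,C,D}. -/
def surf (A B C D : ℂ) : Set (Fin 3 → ℂ) :=
  {p | p 0 ^ 2 + p 1 ^ 2 + p 2 ^ 2 + p 0 * p 1 * p 2
    = A * p 0 + B * p 1 + C * p 2 + D}

/-- The gradient of the defining polynomial of S_{A,B,C,D}. -/
def gradf (A B C : ℂ) (p : Fin 3 → ℂ) : Fin 3 → ℂ :=
  ![2 * p 0 + p 1 * p 2 - A, 2 * p 1 + p 0 * p 2 - B, 2 * p 2 + p 0 * p 1 - C]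

namespace Stmt3Aux

/-- cross product on ℂ³ -/
def cross (v w : Fin 3 → ℂ) : Fin 3 → ℂ :=
  ![v 1 * w 2 - v 2 * w 1, v 2 * w 0 - v 0 * w 2, v 0 * w 1 - v 1 * w 0]

abbrev pr (i : Fin 3) : (Fin 3 → ℂ) →L[ℂ] ℂ := ContinuousLinearMap.proj i

lemma hasF_sx (A : ℂ) (p : Fin 3 → ℂ) :
    HasFDerivAt (𝕜 := ℂ) (sxE A) (ContinuousLinearMap.pi
      ![-(pr 0) - (p 1 • pr 2 + p 2 • pr 1), pr 1, pr 2]) p := by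
  unfold sxE
  rw [hasFDerivAt_pi']
  intro i
  fin_cases i <;>
    simp only [sxE, Matrix.cons_val_zero, Matrix.cons_val_one, Matrix.head_cons,
      Fin.isValue, Matrix.cons_val_two, Matrix.tail_cons, ContinuousLinearMap.proj_pi]
  · exact (((hasFDerivAt_apply 0 p).neg).sub
      ((hasFDerivAt_apply 1 p).mul (hasFDerivAt_apply 2 p))).add_const A
  · exact hasFDerivAt_apply 1 p
  · exact hasFDerivAt_apply 2 p

lemma hasF_sy (B : ℂ) (p : Fin 3 → ℂ) :
    HasFDerivAt (𝕜 := ℂ) (syE B) (ContinuousLinearMap.pi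
      ![pr 0, -(pr 1) - (p 0 • pr 2 + p 2 • pr 0), pr 2]) p := by
  unfold syE
  rw [hasFDerivAt_pi']
  intro i
  fin_cases i <;>
    simp only [syE, Matrix.cons_val_zero, Matrix.cons_val_one, Matrix.head_cons,
      Fin.isValue, Matrix.cons_val_two, Matrix.tail_cons, ContinuousLinearMap.proj_pi]
  · exact hasFDerivAt_apply 0 p
  · exact (((hasFDerivAt_apply 1 p).neg).sub
      ((hasFDerivAt_apply 0 p).mul (hasFDerivAt_apply 2 p))).add_const B
  · exact hasFDerivAt_apply 2 p

lemma hasF_sz (C : ℂ) (p : Fin 3 → ℂ) :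
    HasFDerivAt (𝕜 := ℂ) (szE C) (ContinuousLinearMap.pi
      ![pr 0, pr 1, -(pr 2) - (p 0 • pr 1 + p 1 • pr 0)]) p := by
  unfold szE
  rw [hasFDerivAt_pi']
  intro i
  fin_cases i <;>
    simp only [szE, Matrix.cons_val_zero, Matrix.cons_val_one, Matrix.head_cons,
      Fin.isValue, Matrix.cons_val_two, Matrix.tail_cons, ContinuousLinearMap.proj_pi]
  · exact hasFDerivAt_apply 0 p
  · exact hasFDerivAt_apply 1 p
  · exact (((hasFDerivAt_apply 2 p).neg).sub
      ((hasFDerivAt_apply 0 p).mul (hasFDerivAt_apply 1 p))).add_const C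

lemma fderiv_sx (A : ℂ) (p v : Fin 3 → ℂ) :
    fderiv ℂ (sxE A) p v = ![-v 0 - p 1 * v 2 - p 2 * v 1, v 1, v 2] := by
  rw [(hasF_sx A p).fderiv]
  funext i
  fin_cases i <;> simp <;> ring

lemma fderiv_sy (B : ℂ) (p v : Fin 3 → ℂ) :
    fderiv ℂ (syE B) p v = ![v 0, -v 1 - p 0 * v 2 - p 2 * v 0, v 2] := by
  rw [(hasF_sy B p).fderiv]
  funext i
  fin_cases i <;> simp <;> ring

lemma fderiv_sz (C : ℂ) (p v : Fin 3 → ℂ) :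
    fderiv ℂ (szE C) p v = ![v 0, v 1, -v 2 - p 0 * v 1 - p 1 * v 0] := by
  rw [(hasF_sz C p).fderiv]
  funext i
  fin_cases i <;> simp <;> ring

/-- The property that a map multiplies Ω by ε, in denominator-free (cross-product) form. -/
def Qp (A B C D ε : ℂ) (f : (Fin 3 → ℂ) → (Fin 3 → ℂ)) : Prop :=
  Differentiable ℂ f ∧ ∀ p ∈ surf A B C D, f p ∈ surf A B C D ∧
    ∀ v w lam : _, cross v w = lam • gradf A B C p →
      cross (fderiv ℂ f p v) (fderiv ℂ f p w) = (ε * lam) • gradf A B C (f p)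

lemma Qp_sx (A B C D : ℂ) : Qp A B C D (-1) (sxE A) := by
  constructor
  · exact fun p => (hasF_sx A p).differentiableAt
  intro p hp
  simp only [surf, Set.mem_setOf_eq] at hp ⊢
  constructor
  · simp only [sxE, Matrix.cons_val_zero, Matrix.cons_val_one, Matrix.head_cons,
      Matrix.cons_val_two, Matrix.tail_cons]
    linear_combination hp
  intro v w lam hc
  have h0 := congrFun hc 0
  have h1 := congrFun hc 1
  have h2 := congrFun hc 2
  simp only [cross, gradf, Matrix.cons_val_zero, Matrix.cons_val_one, Matrix.head_cons,
    Matrix.cons_val_two, Matrix.tail_cons, Pi.smul_apply, smul_eq_mul] at h0 h1 h2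
  rw [fderiv_sx, fderiv_sx]
  funext i
  fin_cases i <;>
    simp [cross, sxE, gradf, Matrix.cons_val_two, Matrix.tail_cons]
  · linear_combination h0
  · linear_combination p 2 * h0 - h1
  · linear_combination p 1 * h0 - h2

lemma Qp_sy (A B C D : ℂ) : Qp A B C D (-1) (syE B) := by
  constructor
  · exact fun p => (hasF_sy B p).differentiableAt
  intro p hp
  simp only [surf, Set.mem_setOf_eq] at hp ⊢
  constructor
  · simp only [syE, Matrix.cons_val_zero, Matrix.cons_val_one, Matrix.head_cons,
      Matrix.cons_val_two, Matrix.tail_cons]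
    linear_combination hp
  intro v w lam hc
  have h0 := congrFun hc 0
  have h1 := congrFun hc 1
  have h2 := congrFun hc 2
  simp only [cross, gradf, Matrix.cons_val_zero, Matrix.cons_val_one, Matrix.head_cons,
    Matrix.cons_val_two, Matrix.tail_cons, Pi.smul_apply, smul_eq_mul] at h0 h1 h2
  rw [fderiv_sy, fderiv_sy]
  funext i
  fin_cases i <;>
    simp [cross, syE, gradf, Matrix.cons_val_two, Matrix.tail_cons]
  · linear_combination p 2 * h1 - h0
  · linear_combination h1
  · linear_combination p 0 * h1 - h2

lemma Qp_sz (A B C D : ℂ) : Qp A B C D (-1) (szE C) := by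
  constructor
  · exact fun p => (hasF_sz C p).differentiableAt
  intro p hp
  simp only [surf, Set.mem_setOf_eq] at hp ⊢
  constructor
  · simp only [szE, Matrix.cons_val_zero, Matrix.cons_val_one, Matrix.head_cons,
      Matrix.cons_val_two, Matrix.tail_cons]
    linear_combination hp
  intro v w lam hc
  have h0 := congrFun hc 0
  have h1 := congrFun hc 1
  have h2 := congrFun hc 2
  simp only [cross, gradf, Matrix.cons_val_zero, Matrix.cons_val_one, Matrix.head_cons,
    Matrix.cons_val_two, Matrix.tail_cons, Pi.smul_apply, smul_eq_mul] at h0 h1 h2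
  rw [fderiv_sz, fderiv_sz]
  funext i
  fin_cases i <;>
    simp [cross, szE, gradf, Matrix.cons_val_two, Matrix.tail_cons]
  · linear_combination p 1 * h2 - h0
  · linear_combination p 0 * h2 - h1
  · linear_combination h2

lemma Qp_comp (A B C D ε δ : ℂ) (f g : (Fin 3 → ℂ) → (Fin 3 → ℂ))
    (hf : Qp A B C D ε f) (hg : Qp A B C D δ g) : Qp A B C D (ε * δ) (f ∘ g) := by
  obtain ⟨hfd, hf⟩ := hf
  obtain ⟨hgd, hg⟩ := hg
  refine ⟨hfd.comp hgd, ?_⟩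
  intro p hp
  obtain ⟨hgp, hgc⟩ := hg p hp
  obtain ⟨hfp, hfc⟩ := hf (g p) hgp
  refine ⟨hfp, ?_⟩
  intro v w lam hc
  have hcomp : fderiv ℂ (f ∘ g) p = (fderiv ℂ f (g p)).comp (fderiv ℂ g p) :=
    fderiv_comp p (hfd (g p)) (hgd p)
  simp only [hcomp, ContinuousLinearMap.coe_comp', Function.comp_apply]
  have := hfc (fderiv ℂ g p v) (fderiv ℂ g p w) (δ * lam) (hgc v w lam hc)
  rw [this]
  ring_nf

lemma Qp_one (A B C D : ℂ) : Qp A B C D 1 (1 : Function.End (Fin 3 → ℂ)) := by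
  refine ⟨differentiable_id, ?_⟩
  intro p hp
  refine ⟨hp, ?_⟩
  intro v w lam hc
  have hid : fderiv ℂ (1 : Function.End (Fin 3 → ℂ)) p = ContinuousLinearMap.id ℂ _ :=
    fderiv_id
  simp only [hid, ContinuousLinearMap.coe_id', id_eq, one_mul]
  exact hc

/-- tangency gives full proportionality of the cross product with the gradient -/
lemma tangent_cross (A B C : ℂ) (p v w : Fin 3 → ℂ)
    (hg : 2 * p 0 + p 1 * p 2 - A ≠ 0)
    (hv : (∑ i, gradf A B C p i * v i) = 0)
    (hw : (∑ i, gradf A B C p i * w i) = 0) :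
    cross v w = ((v 1 * w 2 - v 2 * w 1) / (2 * p 0 + p 1 * p 2 - A)) • gradf A B C p := by
  simp only [Fin.sum_univ_three, gradf, Matrix.cons_val_zero, Matrix.cons_val_one,
    Matrix.head_cons, Matrix.cons_val_two, Matrix.tail_cons] at hv hw
  funext i
  fin_cases i <;>
    simp only [cross, gradf, Matrix.cons_val_zero, Matrix.cons_val_one, Matrix.head_cons,
      Matrix.cons_val_two, Matrix.tail_cons, Pi.smul_apply, smul_eq_mul,
      Fin.zero_eta, Fin.mk_one, Fin.reduceFinMk] <;>
    field_simp
  · linear_combination v 2 * hw - w 2 * hv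
  · linear_combination w 1 * hv - v 1 * hw

end Stmt3Aux

/-- Each involution s ∈ {s_x, s_y, s_z} satisfies s^*Ω = -Ω, where
Ω = dy∧dz/(2x+yz-A) on the smooth part of S_{A,B,C,D} (expressed on tangent vectors),
and consequently every element of Γ = ⟨g_x, g_y, g_z⟩ (with g_x = s_z∘s_y,
g_y = s_x∘s_z, g_z = s_y∘s_x) preserves Ω. -/
theorem stmt3 (A B C D : ℂ) :
    (∀ s ∈ ({sxE A, syE B, szE C} : Set (Function.End (Fin 3 → ℂ))),
      ∀ p ∈ surf A B C D,
        2 * p 0 + p 1 * p 2 - A ≠ 0 →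
        2 * s p 0 + s p 1 * s p 2 - A ≠ 0 →
        ∀ v w : Fin 3 → ℂ,
          (∑ i, gradf A B C p i * v i) = 0 → (∑ i, gradf A B C p i * w i) = 0 →
          ((fderiv ℂ (s : (Fin 3 → ℂ) → (Fin 3 → ℂ)) p v) 1 *
                (fderiv ℂ (s : (Fin 3 → ℂ) → (Fin 3 → ℂ)) p w) 2
              - (fderiv ℂ (s : (Fin 3 → ℂ) → (Fin 3 → ℂ)) p v) 2 *
                (fderiv ℂ (s : (Fin 3 → ℂ) → (Fin 3 → ℂ)) p w) 1)
              / (2 * s p 0 + s p 1 * s p 2 - A)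
            = -((v 1 * w 2 - v 2 * w 1) / (2 * p 0 + p 1 * p 2 - A)))
    ∧
    (∀ γ ∈ Submonoid.closure
        ({szE C * syE B, sxE A * szE C, syE B * sxE A} : Set (Function.End (Fin 3 → ℂ))),
      ∀ p ∈ surf A B C D,
        2 * p 0 + p 1 * p 2 - A ≠ 0 →
        2 * γ p 0 + γ p 1 * γ p 2 - A ≠ 0 →
        ∀ v w : Fin 3 → ℂ,
          (∑ i, gradf A B C p i * v i) = 0 → (∑ i, gradf A B C p i * w i) = 0 →
          ((fderiv ℂ (γ : (Fin 3 → ℂ) → (Fin 3 → ℂ)) p v) 1 *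
                (fderiv ℂ (γ : (Fin 3 → ℂ) → (Fin 3 → ℂ)) p w) 2
              - (fderiv ℂ (γ : (Fin 3 → ℂ) → (Fin 3 → ℂ)) p v) 2 *
                (fderiv ℂ (γ : (Fin 3 → ℂ) → (Fin 3 → ℂ)) p w) 1)
              / (2 * γ p 0 + γ p 1 * γ p 2 - A)
            = (v 1 * w 2 - v 2 * w 1) / (2 * p 0 + p 1 * p 2 - A)) := by
  constructor
  · -- part 1
    intro s hs p hp hgp hgsp v w hv hw
    have hQ : Stmt3Aux.Qp A B C D (-1) (s : (Fin 3 → ℂ) → (Fin 3 → ℂ)) := by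
      rcases hs with h | h | h
      · rw [h]; exact Stmt3Aux.Qp_sx A B C D
      · rw [h]; exact Stmt3Aux.Qp_sy A B C D
      · rw [Set.mem_singleton_iff.mp h]; exact Stmt3Aux.Qp_sz A B C D
    set lam := (v 1 * w 2 - v 2 * w 1) / (2 * p 0 + p 1 * p 2 - A) with hlam
    have hc := Stmt3Aux.tangent_cross A B C p v w hgp hv hw
    have hkey := (hQ.2 p hp).2 v w lam hc
    have h0 := congrFun hkey 0
    simp only [Stmt3Aux.cross, gradf, Matrix.cons_val_zero, Matrix.cons_val_one, Matrix.head_cons,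
      Matrix.cons_val_two, Matrix.tail_cons, Pi.smul_apply, smul_eq_mul] at h0
    rw [h0]
    field_simp
  · -- part 2
    intro γ hγ
    have hQ : Stmt3Aux.Qp A B C D 1 (γ : (Fin 3 → ℂ) → (Fin 3 → ℂ)) := by
      induction hγ using Submonoid.closure_induction with
      | mem x hx =>
        rcases hx with h | h | h
        · rw [h]
          have := Stmt3Aux.Qp_comp A B C D (-1) (-1) (szE C) (syE B) (Stmt3Aux.Qp_sz A B C D) (Stmt3Aux.Qp_sy A B C D)
          norm_num at this
          exact this
        · rw [h]
          have := Stmt3Aux.Qp_comp A B C D (-1) (-1) (sxE A) (szE C) (Stmt3Aux.Qp_sx A B C D) (Stmt3Aux.Qp_sz A B C D)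
          norm_num at this
          exact this
        · rw [Set.mem_singleton_iff.mp h]
          have := Stmt3Aux.Qp_comp A B C D (-1) (-1) (syE B) (sxE A) (Stmt3Aux.Qp_sy A B C D) (Stmt3Aux.Qp_sx A B C D)
          norm_num at this
          exact this
      | one => exact Stmt3Aux.Qp_one A B C D
      | mul x y hx hy ihx ihy =>
        have := Stmt3Aux.Qp_comp A B C D 1 1 (x : (Fin 3 → ℂ) → (Fin 3 → ℂ))
          (y : (Fin 3 → ℂ) → (Fin 3 → ℂ)) ihx ihy
        norm_num at this
        exact this
    intro p hp hgp hgγp v w hv hw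
    set lam := (v 1 * w 2 - v 2 * w 1) / (2 * p 0 + p 1 * p 2 - A) with hlam
    have hc := Stmt3Aux.tangent_cross A B C p v w hgp hv hw
    have hkey := (hQ.2 p hp).2 v w lam hc
    have h0 := congrFun hkey 0
    simp only [Stmt3Aux.cross, gradf, Matrix.cons_val_zero, Matrix.cons_val_one, Matrix.head_cons,
      Matrix.cons_val_two, Matrix.tail_cons, Pi.smul_apply, smul_eq_mul] at h0
    rw [h0]
    field_simp

end
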